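/- Let σ be a partition of the set of all primes and G a finite group with |π(G)| = |σ(G)| (i.e. each member of σ meeting π(G) contains exactly one prime of π(G)). If H is a σ-subnormal subgroup of G, then H is subnormal in G. -/

import Mathlib

open Subgroup Pointwise

/-- `σ` is a partition of the set of all primes: every member of every block is prime,
and every prime lies in exactly one block. -/
def IsPrimePartition {ι : Type*} (σ : ι → Set ℕ) : Prop :=
  (∀ i, ∀ p ∈ σ i, Nat.Prime p) ∧ ∀ p : ℕ, Nat.Prime p → ∃! i, p ∈ σ i

/-- `σ(m)`: the set of indices `i` such that `σ i` contains a prime divisor of `m`. -/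
def sigmaClasses {ι : Type*} (σ : ι → Set ℕ) (m : ℕ) : Set ι :=
  {i | ∃ p ∈ σ i, Nat.Prime p ∧ p ∣ m}

/-- A group of order `m` is `σ`-primary iff `m = 1` or `|σ(m)| = 1`. -/
def IsSigmaPrimary {ι : Type*} (σ : ι → Set ℕ) (m : ℕ) : Prop :=
  m = 1 ∨ (sigmaClasses σ m).ncard = 1

/-- `m` is a `Π`-number: every prime divisor of `m` lies in some block belonging to `Π`. -/
def IsPiNumber {ι : Type*} (σ : ι → Set ℕ) (Pi : Set ι) (m : ℕ) : Prop :=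
  ∀ p : ℕ, Nat.Prime p → p ∣ m → ∃ i ∈ Pi, p ∈ σ i

/-- `H` is a Hall `Π`-subgroup of `G`: `|H|` is a `Π`-number and `|G : H|` is a `Π'`-number. -/
def IsHallPiSubgroup {ι : Type*} (σ : ι → Set ℕ) (Pi : Set ι) {G : Type*} [Group G]
    (H : Subgroup G) : Prop :=
  IsPiNumber σ Pi (Nat.card H) ∧ IsPiNumber σ Piᶜ H.index

/-- `A` is `σ`-subnormal in `G`. -/
def IsSigmaSubnormal {ι : Type*} (σ : ι → Set ℕ) {G : Type*} [Group G] (A : Subgroup G) : Prop :=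
  ∃ (t : ℕ) (c : Fin (t + 1) → Subgroup G), Monotone c ∧ c 0 = A ∧ c (Fin.last t) = ⊤ ∧
    ∀ i : Fin t, ((c i.castSucc).subgroupOf (c i.succ)).Normal ∨
      IsSigmaPrimary σ
        (Nat.card (↥(c i.succ) ⧸ ((c i.castSucc).subgroupOf (c i.succ)).normalCore))

/-- `M/N` is a chief factor of `G`. -/
def IsChiefFactor {G : Type*} [Group G] (N M : Subgroup G) : Prop :=
  N.Normal ∧ M.Normal ∧ N < M ∧
    ∀ K : Subgroup G, K.Normal → N ≤ K → K ≤ M → K = N ∨ K = M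

/-- `G` is `σ`-soluble: every chief factor of `G` is `σ`-primary. -/
def IsSigmaSoluble {ι : Type*} (σ : ι → Set ℕ) (G : Type*) [Group G] : Prop :=
  ∀ N M : Subgroup G, IsChiefFactor N M →
    IsSigmaPrimary σ (Nat.card (↥M ⧸ N.subgroupOf M))

/-- `A` is an `n`-maximal subgroup of `G`. -/
def IsNMaximal {G : Type*} [Group G] (n : ℕ) (A : Subgroup G) : Prop :=
  ∃ c : Fin (n + 1) → Subgroup G, Monotone c ∧ c 0 = A ∧ c (Fin.last n) = ⊤ ∧
    ∀ i : Fin n, IsCoatom ((c i.castSucc).subgroupOf (c i.succ))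

/-- `A` is subnormal in `G`. -/
def IsSubnormalSubgroup {G : Type*} [Group G] (A : Subgroup G) : Prop :=
  ∃ (t : ℕ) (c : Fin (t + 1) → Subgroup G), Monotone c ∧ c 0 = A ∧ c (Fin.last t) = ⊤ ∧
    ∀ i : Fin t, ((c i.castSucc).subgroupOf (c i.succ)).Normal

/-- `S` is a complete Hall `σ`-set of `G`. -/
def IsCompleteHallSigmaSet {ι : Type*} (σ : ι → Set ℕ) {G : Type*} [Group G]
    (S : Set (Subgroup G)) : Prop :=
  (∀ H ∈ S, H ≠ ⊥ → ∃ i ∈ sigmaClasses σ (Nat.card G), IsHallPiSubgroup σ {i} H) ∧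
  ∀ i ∈ sigmaClasses σ (Nat.card G), ∃! H, H ∈ S ∧ IsHallPiSubgroup σ {i} H

/-- `G` is `σ`-dispersive. -/
def IsSigmaDispersive {ι : Type*} (σ : ι → Set ℕ) (G : Type*) [Group G] : Prop :=
  ∃ (t : ℕ) (c : Fin (t + 1) → Subgroup G) (H : Fin t → Subgroup G),
    StrictMono c ∧ c 0 = ⊥ ∧ c (Fin.last t) = ⊤ ∧ (∀ i, (c i).Normal) ∧
    IsCompleteHallSigmaSet σ (Set.range H) ∧
    ∀ i : Fin t, (c i.castSucc : Set G) * (H i : Set G) = (c i.succ : Set G)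


section Aux

variable {G : Type*} [Group G]

/-- Concrete form of "`A` is normal in `B`" for subgroups of an ambient group. -/
def RelN (A B : Subgroup G) : Prop :=
  A ≤ B ∧ ∀ b ∈ B, ∀ a ∈ A, b * a * b⁻¹ ∈ A

lemma relN_iff_normal {A B : Subgroup G} (h : A ≤ B) :
    RelN A B ↔ (A.subgroupOf B).Normal := by
  constructor
  · rintro ⟨-, hc⟩
    constructor
    rintro n hn g
    simp only [Subgroup.mem_subgroupOf] at *
    exact hc _ g.2 _ hn
  · intro hN
    refine ⟨h, fun b hb a ha => ?_⟩
    have := hN.conj_mem ⟨a, h ha⟩ (by simpa [Subgroup.mem_subgroupOf]) ⟨b, hb⟩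
    simpa [Subgroup.mem_subgroupOf] using this

lemma isSubnormal_cons {A B : Subgroup G} (hr : RelN A B) (hB : IsSubnormalSubgroup B) :
    IsSubnormalSubgroup A := by
  obtain ⟨t, c, hmono, hc0, hclast, hnorm⟩ := hB
  refine ⟨t + 1, Fin.cons A c, ?_, ?_, ?_, ?_⟩
  · rw [Fin.monotone_iff_le_succ]
    intro i
    induction i using Fin.cases with
    | zero =>
      rw [Fin.castSucc_zero, Fin.cons_zero, Fin.succ_zero_eq_one,
        show (1 : Fin (t + 2)) = Fin.succ 0 from rfl, Fin.cons_succ, hc0]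
      exact hr.1
    | succ j =>
      rw [← Fin.succ_castSucc, Fin.cons_succ, Fin.cons_succ]
      exact hmono (Fin.castSucc_lt_succ (i := j)).le
  · exact Fin.cons_zero _ _
  · rw [← Fin.succ_last, Fin.cons_succ, hclast]
  · intro i
    induction i using Fin.cases with
    | zero =>
      rw [Fin.castSucc_zero, Fin.cons_zero, Fin.succ_zero_eq_one,
        show (1 : Fin (t + 2)) = Fin.succ 0 from rfl, Fin.cons_succ, hc0]
      exact (relN_iff_normal hr.1).mp hr
    | succ j =>
      rw [← Fin.succ_castSucc, Fin.cons_succ, Fin.cons_succ]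
      exact hnorm j

lemma isSubnormal_of_reflTransGen {A : Subgroup G} (h : Relation.ReflTransGen RelN A ⊤) :
    IsSubnormalSubgroup A := by
  induction h using Relation.ReflTransGen.head_induction_on with
  | refl => exact ⟨0, fun _ => ⊤, monotone_const, rfl, rfl, fun i => i.elim0⟩
  | head hr _ ih => exact isSubnormal_cons hr ih

lemma subgroup_eq_of_le_of_card_le [Finite G] {A B : Subgroup G} (h : A ≤ B)
    (hc : Nat.card B ≤ Nat.card A) : A = B := by
  have hA : Nat.card A = (A : Set G).ncard := Nat.card_coe_set_eq _
  have hB : Nat.card B = (B : Set G).ncard := Nat.card_coe_set_eq _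
  refine SetLike.coe_injective (Set.eq_of_subset_of_ncard_le h ?_ (Set.toFinite _))
  rw [← hA, ← hB]; exact hc

lemma reflTransGen_of_pgroup [Finite G] {A B : Subgroup G} (hAB : A ≤ B) {p : ℕ}
    (hp : p.Prime) (hpow : ∃ k, Nat.card (↥B ⧸ (A.subgroupOf B).normalCore) = p ^ k) :
    Relation.ReflTransGen RelN A B := by
  set K := (A.subgroupOf B).normalCore with hKdef
  haveI : Fact p.Prime := ⟨hp⟩
  obtain ⟨k, hk⟩ := hpow
  have hPQ : IsPGroup p (↥B ⧸ K) := IsPGroup.of_card hk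
  haveI := hPQ.isNilpotent
  have hNC : NormalizerCondition (↥B ⧸ K) := normalizerCondition_of_isNilpotent
  set π : ↥B →* ↥B ⧸ K := QuotientGroup.mk' K with hπ
  have main : ∀ n : ℕ, ∀ A' : Subgroup G, A' ≤ B → K ≤ A'.subgroupOf B →
      Nat.card B - Nat.card A' ≤ n → Relation.ReflTransGen RelN A' B := by
    intro n
    induction n with
    | zero =>
      intro A' hle hKle hcard
      have h1 : Nat.card A' ≤ Nat.card B := Subgroup.card_le_of_le hle
      have h2 : Nat.card B ≤ Nat.card A' := by
        have : (0 : ℕ) < Nat.card A' := Nat.card_pos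
        omega
      rw [subgroup_eq_of_le_of_card_le hle h2]
    | succ n ih =>
      intro A' hle hKle hcard
      by_cases heq : A' = B
      · rw [heq]
      have hA'B : A'.subgroupOf B ≠ ⊤ := fun h =>
        heq (le_antisymm hle (Subgroup.subgroupOf_eq_top.mp h))
      set Abar := (A'.subgroupOf B).map π with hAbar
      have hcomap : Abar.comap π = A'.subgroupOf B := by
        rw [hAbar, Subgroup.comap_map_eq, QuotientGroup.ker_mk']
        exact sup_eq_left.mpr hKle
      have hAbartop : Abar ≠ ⊤ := by
        intro h
        apply hA'B
        rw [← hcomap, h, Subgroup.comap_top]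
      have hlt : Abar < Subgroup.normalizer (Abar : Set _) := hNC Abar (lt_top_iff_ne_top.mpr hAbartop)
      set A₁' := (Subgroup.normalizer (Abar : Set _)).comap π with hA₁'
      have hA'le : A'.subgroupOf B ≤ A₁' := hcomap ▸ Subgroup.comap_mono hlt.le
      have hsurj : Function.Surjective π := QuotientGroup.mk'_surjective K
      have hne : A'.subgroupOf B ≠ A₁' := by
        intro h
        have h2 := Subgroup.map_comap_eq_self_of_surjective hsurj (Subgroup.normalizer (Abar : Set _))
        rw [← hA₁', ← h, ← hAbar] at h2
        exact hlt.ne h2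
      set A₁ := A₁'.map B.subtype with hA₁
      have hA₁le : A₁ ≤ B := Subgroup.map_subtype_le A₁'
      have hA₁sub : A₁.subgroupOf B = A₁' :=
        Subgroup.comap_map_eq_self_of_injective B.subtype_injective A₁'
      have hAeq : A' = (A'.subgroupOf B).map B.subtype := by
        rw [Subgroup.subgroupOf_map_subtype, inf_eq_left.mpr hle]
      have hle1 : A' ≤ A₁ := by
        rw [hAeq, hA₁]
        exact Subgroup.map_mono hA'le
      have hne1 : A' ≠ A₁ := by
        intro h
        apply hne
        rw [← hA₁sub, ← h]
      have hcard1 : Nat.card A' < Nat.card A₁ :=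
        lt_of_le_of_ne (Subgroup.card_le_of_le hle1)
          (fun h => hne1 (subgroup_eq_of_le_of_card_le hle1 h.ge))
      have hrel : RelN A' A₁ := by
        refine ⟨hle1, fun b hb a ha => ?_⟩
        rw [hA₁, Subgroup.mem_map] at hb
        obtain ⟨x, hx, hxb⟩ := hb
        have haB : a ∈ B := hle ha
        have haA' : (⟨a, haB⟩ : ↥B) ∈ A'.subgroupOf B := by
          simpa [Subgroup.mem_subgroupOf]
        have hπa : π ⟨a, haB⟩ ∈ Abar := Subgroup.mem_map_of_mem π haA'
        have hπx : π x ∈ Subgroup.normalizer (Abar : Set _) := hx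
        have hconj : π x * π ⟨a, haB⟩ * (π x)⁻¹ ∈ Abar :=
          (Subgroup.mem_normalizer_iff.mp hπx _).mp hπa
        have : x * ⟨a, haB⟩ * x⁻¹ ∈ A'.subgroupOf B := by
          rw [← hcomap, Subgroup.mem_comap, map_mul, map_mul, map_inv]
          exact hconj
        rw [Subgroup.mem_subgroupOf] at this
        simpa [← hxb] using this
      have hK1 : K ≤ A₁.subgroupOf B := by
        rw [hA₁sub, hA₁']
        intro x hx
        rw [Subgroup.mem_comap]
        have : π x = 1 := (QuotientGroup.eq_one_iff x).mpr hx
        rw [this]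
        exact one_mem _
      have hcard2 : Nat.card B - Nat.card A₁ ≤ n := by omega
      exact Relation.ReflTransGen.head hrel (ih A₁ hA₁le hK1 hcard2)
  exact main (Nat.card B) A hAB (Subgroup.normalCore_le _) (Nat.sub_le _ _)

end Aux

/-- Under the hypothesis `|π(N)| = |σ(N)|`, a `σ`-primary divisor of `N` is a prime power. -/
lemma primePow_of_sigmaPrimary {ι : Type*} {σ : ι → Set ℕ} (hσ : IsPrimePartition σ)
    {N m : ℕ} (hN0 : N ≠ 0)
    (hcard : N.primeFactors.card = (sigmaClasses σ N).ncard)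
    (hm : m ∣ N) (hm0 : m ≠ 0) (hprim : IsSigmaPrimary σ m) :
    m = 1 ∨ ∃ p k, p.Prime ∧ m = p ^ k := by
  by_cases hm1 : m = 1
  · exact Or.inl hm1
  rcases hprim with h1 | hnc
  · exact Or.inl h1
  right
  classical
  set T := sigmaClasses σ N with hT
  have hw : ∀ i ∈ T, ∃ q, q ∈ σ i ∧ q.Prime ∧ q ∣ N := fun i hi => hi
  set w : ι → ℕ := fun i => if h : i ∈ T then (hw i h).choose else 0 with hwdef
  have hwspec : ∀ i ∈ T, w i ∈ σ i ∧ (w i).Prime ∧ w i ∣ N := by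
    intro i hi
    simp only [hwdef, dif_pos hi]
    exact (hw i hi).choose_spec
  have hinj : Set.InjOn w T := by
    intro i hi j hj hij
    obtain ⟨hi1, hi2, -⟩ := hwspec i hi
    obtain ⟨hj1, hj2, -⟩ := hwspec j hj
    obtain ⟨i', hi', huniq⟩ := hσ.2 (w i) hi2
    rw [huniq i hi1, huniq j (hij ▸ hj1)]
  have hsubset : w '' T ⊆ (N.primeFactors : Set ℕ) := by
    rintro q ⟨i, hi, rfl⟩
    obtain ⟨-, h2, h3⟩ := hwspec i hi
    exact Nat.mem_primeFactors.mpr ⟨h2, h3, hN0⟩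
  have hTfin : T.Finite :=
    Set.Finite.of_finite_image ((N.primeFactors : Set ℕ).toFinite.subset hsubset) hinj
  have himg : w '' T = (N.primeFactors : Set ℕ) := by
    apply Set.eq_of_subset_of_ncard_le hsubset _ (Set.toFinite _)
    rw [Set.ncard_image_of_injOn hinj, Set.ncard_coe_finset, hcard]
  have hsurj : ∀ q ∈ N.primeFactors, ∃ i ∈ T, w i = q := by
    intro q hq
    have : q ∈ w '' T := himg ▸ (by exact_mod_cast hq)
    obtain ⟨i, hi, hwi⟩ := this
    exact ⟨i, hi, hwi⟩
  obtain ⟨i₀, hi₀⟩ := Set.ncard_eq_one.mp hnc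
  have hclass : ∀ q, q.Prime → q ∣ m → q ∈ σ i₀ := by
    intro q hq hqm
    obtain ⟨j, hj, huniq⟩ := hσ.2 q hq
    have : j ∈ sigmaClasses σ m := ⟨q, hj, hq, hqm⟩
    rw [hi₀, Set.mem_singleton_iff] at this
    rw [← this]; exact hj
  have hall : ∀ q, q.Prime → q ∣ m → q = m.minFac := by
    have hmf : m.minFac.Prime := Nat.minFac_prime hm1
    have hmfd : m.minFac ∣ m := Nat.minFac_dvd m
    intro q hq hqm
    have hq0 : q ∈ σ i₀ := hclass q hq hqm
    have hmf0 : m.minFac ∈ σ i₀ := hclass _ hmf hmfd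
    have hqN : q ∈ N.primeFactors := Nat.mem_primeFactors.mpr ⟨hq, hqm.trans hm, hN0⟩
    have hmfN : m.minFac ∈ N.primeFactors :=
      Nat.mem_primeFactors.mpr ⟨hmf, hmfd.trans hm, hN0⟩
    obtain ⟨iq, hiq, hwq⟩ := hsurj q hqN
    obtain ⟨imf, himf, hwmf⟩ := hsurj m.minFac hmfN
    obtain ⟨hwq1, hwq2, -⟩ := hwspec iq hiq
    obtain ⟨hwmf1, hwmf2, -⟩ := hwspec imf himf
    obtain ⟨j, hj, huniq⟩ := hσ.2 q hq
    have hiq0 : iq = i₀ := (huniq iq (hwq ▸ hwq1)).trans (huniq i₀ hq0).symm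
    obtain ⟨j', hj', huniq'⟩ := hσ.2 m.minFac hmf
    have himf0 : imf = i₀ := (huniq' imf (hwmf ▸ hwmf1)).trans (huniq' i₀ hmf0).symm
    rw [← hwq, hiq0, ← himf0, hwmf]
  exact ⟨m.minFac, m.primeFactorsList.length, Nat.minFac_prime hm1,
    Nat.eq_prime_pow_of_unique_prime_dvd hm0 fun hd hdvd => hall _ hd hdvd⟩

/-- If `|π(G)| = |σ(G)|` and `H` is `σ`-subnormal in `G`, then `H` is subnormal in `G`. -/
theorem subnormal_of_sigmaSubnormal
    {ι : Type*} (σ : ι → Set ℕ) (hσ : IsPrimePartition σ)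
    (G : Type*) [Group G] [Finite G]
    (hcard : (Nat.card G).primeFactors.card = (sigmaClasses σ (Nat.card G)).ncard)
    (H : Subgroup G) (hH : IsSigmaSubnormal σ H) :
    IsSubnormalSubgroup H := by
  obtain ⟨t, c, hmono, hc0, hclast, hstep⟩ := hH
  have hG0 : Nat.card G ≠ 0 := Nat.card_pos.ne'
  have step : ∀ i : Fin t, Relation.ReflTransGen RelN (c i.castSucc) (c i.succ) := by
    intro i
    have hle : c i.castSucc ≤ c i.succ := hmono (Fin.castSucc_lt_succ (i := i)).le
    rcases hstep i with hnorm | hprim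
    · exact Relation.ReflTransGen.single ((relN_iff_normal hle).mpr hnorm)
    · set A := c i.castSucc
      set B := c i.succ
      set K := (A.subgroupOf B).normalCore with hKdef
      set m := Nat.card (↥B ⧸ K) with hm
      have hmidx : m = K.index := rfl
      have hmdvd : m ∣ Nat.card G := by
        rw [hmidx]
        exact (Subgroup.index_dvd_card K).trans (Subgroup.card_subgroup_dvd_card B)
      have hm0 : m ≠ 0 := Nat.card_pos.ne'
      rcases primePow_of_sigmaPrimary hσ hG0 hcard hmdvd hm0 hprim with h1 | ⟨p, k, hp, hpk⟩
      · have hKtop : K = ⊤ := Subgroup.index_eq_one.mp (hmidx ▸ h1)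
        have : A.subgroupOf B = ⊤ := top_le_iff.mp (hKtop ▸ Subgroup.normalCore_le _)
        have hBA : B ≤ A := Subgroup.subgroupOf_eq_top.mp this
        rw [le_antisymm hle hBA]
      · exact reflTransGen_of_pgroup hle hp ⟨k, hpk⟩
  have key : ∀ j, j ≤ t → Relation.ReflTransGen RelN (c ⟨t - j, by omega⟩) ⊤ := by
    intro j
    induction j with
    | zero =>
      intro _
      have : (⟨t - 0, by omega⟩ : Fin (t + 1)) = Fin.last t := by
        ext; simp
      rw [this, hclast]
    | succ j ih =>
      intro hj
      set i : Fin t := ⟨t - (j + 1), by omega⟩ with hi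
      have h1 : (⟨t - (j + 1), by omega⟩ : Fin (t + 1)) = i.castSucc := rfl
      have h2 : i.succ = (⟨t - j, by omega⟩ : Fin (t + 1)) := by
        ext
        simp only [Fin.val_succ, hi]
        omega
      rw [h1]
      exact (step i).trans (h2 ▸ ih (by omega))
  have hH0 : H = c ⟨t - t, by omega⟩ := by
    rw [← hc0]
    congr 1
    ext; simp
  exact isSubnormal_of_reflTransGen (hH0 ▸ key t le_rfl)
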